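/- In a homogeneously self-similar graph, the diameter of the boundary of an n-cell is exactly ν^n. -/

import Mathlib

variable {V : Type*}

/-- `C` is a cell w.r.t. `F`: a connected component of `V X ∖ F`. -/
def IsCellOf (G : SimpleGraph V) (F : Set V) (C : Set V) : Prop :=
  C.Nonempty ∧ C ⊆ Fᶜ ∧ (G.induce C).Preconnected ∧
    ∀ D : Set V, C ⊆ D → D ⊆ Fᶜ → (G.induce D).Preconnected → D = C

/-- vertex boundary θC -/
def vBoundary (G : SimpleGraph V) (C : Set V) : Set V :=
  {v | v ∉ C ∧ ∃ c ∈ C, G.Adj v c}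

/-- closure of a set of vertices -/
def vClosure (G : SimpleGraph V) (C : Set V) : Set V := C ∪ vBoundary G C

/-- edge boundary δC -/
def eBoundary (G : SimpleGraph V) (C : Set V) : Set (Sym2 V) :=
  {e | ∃ x y, G.Adj x y ∧ e = s(x, y) ∧ x ∈ C ∧ y ∉ C}

/-- edges of the cell graph Ĉ (subgraph spanned by the closure of C) -/
def cellEdges (G : SimpleGraph V) (C : Set V) : Set (Sym2 V) :=
  {e | ∃ x y, G.Adj x y ∧ e = s(x, y) ∧ x ∈ vClosure G C ∧ y ∈ vClosure G C}

/-- the reduced graph X_F -/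
def reducedGraph (G : SimpleGraph V) (F : Set V) : SimpleGraph F where
  Adj x y := x ≠ y ∧ ∃ C : Set V, IsCellOf G F C ∧
    (x : V) ∈ vBoundary G C ∧ (y : V) ∈ vBoundary G C
  symm := by
    refine ⟨?_⟩
    rintro x y ⟨hxy, C, hC, hx, hy⟩
    exact ⟨hxy.symm, C, hC, hy, hx⟩
  loopless := by refine ⟨?_⟩; rintro x ⟨hx, -⟩; exact hx rfl

/-- F^n = ψ^n (V X), as a subset of V -/
def Fpow (G : SimpleGraph V) (F : Set V) (ψ : G ≃g reducedGraph G F) : ℕ → Set V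
  | 0 => Set.univ
  | n + 1 => (fun v => ((ψ v : F) : V)) '' Fpow G F ψ n

/-- (F1) no two vertices of F adjacent -/
def AxiomF1 (G : SimpleGraph V) (F : Set V) : Prop :=
  ∀ x ∈ F, ∀ y ∈ F, ¬ G.Adj x y

/-- (F2) closures of distinct cells share at most one vertex -/
def AxiomF2 (G : SimpleGraph V) (F : Set V) : Prop :=
  ∀ C D : Set V, IsCellOf G F C → IsCellOf G F D → C ≠ D →
    (vClosure G C ∩ vClosure G D).Subsingleton

/-- (H1) cell graphs finite, pairwise isomorphic via boundary preserving isomorphisms -/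
def AxiomH1 (G : SimpleGraph V) (F : Set V) : Prop :=
  (∀ C : Set V, IsCellOf G F C → (vClosure G C).Finite) ∧
  ∀ C D : Set V, IsCellOf G F C → IsCellOf G F D →
    ∃ α : G.induce (vClosure G C) ≃g G.induce (vClosure G D),
      ∀ x : vClosure G C, (x : V) ∈ vBoundary G C → ((α x : vClosure G D) : V) ∈ vBoundary G D

/-- (H2) any two distinct boundary vertices of a cell are at distance ν -/
def AxiomH2 (G : SimpleGraph V) (F : Set V) (ν : ℕ) : Prop :=
  ∀ C : Set V, IsCellOf G F C → ∀ x ∈ vBoundary G C, ∀ y ∈ vBoundary G C,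
    x ≠ y → G.dist x y = ν

/-- constant inner degree `b` : every boundary vertex of every cell has degree b in the cell graph -/
def ConstInnerDegree (G : SimpleGraph V) (F : Set V) (b : ℕ) : Prop :=
  ∀ C : Set V, IsCellOf G F C → ∀ v ∈ vBoundary G C,
    {u ∈ vClosure G C | G.Adj v u}.ncard = b

/-- bounded geometry: vertex degrees uniformly bounded -/
def BoundedGeometry (G : SimpleGraph V) : Prop :=
  ∃ M : ℕ, ∀ v : V, (G.neighborSet v).Finite ∧ (G.neighborSet v).ncard ≤ M

/-- volume of a set of vertices -/
noncomputable def volOf (G : SimpleGraph V) (A : Set V) : ℕ :=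
  ∑ᶠ v ∈ A, (G.neighborSet v).ncard

/-- growth function -/
noncomputable def Vfun (G : SimpleGraph V) (x : V) (r : ℕ) : ℕ :=
  volOf G {y | G.dist x y ≤ r}


/-- `u` and `v` are joined by a walk all of whose vertices lie in `S` (unless `u = v`). -/
def Linked (G : SimpleGraph V) (S : Set V) (u v : V) : Prop :=
  Relation.ReflTransGen (fun a b => a ∈ S ∧ b ∈ S ∧ G.Adj a b) u v

lemma Linked.mono {G : SimpleGraph V} {S T : Set V} (hST : S ⊆ T) {u v : V}
    (h : Linked G S u v) : Linked G T u v := by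
  induction h with
  | refl => exact Relation.ReflTransGen.refl
  | tail _ hab ih => exact ih.tail ⟨hST hab.1, hST hab.2.1, hab.2.2⟩

lemma Linked.symm {G : SimpleGraph V} {S : Set V} {u v : V}
    (h : Linked G S u v) : Linked G S v u :=
  haveI : Std.Symm (fun a b => a ∈ S ∧ b ∈ S ∧ G.Adj a b) :=
    ⟨fun _ _ hab => ⟨hab.2.1, hab.1, hab.2.2.symm⟩⟩
  (Relation.ReflTransGen.stdSymm (r := fun a b => a ∈ S ∧ b ∈ S ∧ G.Adj a b)).symm _ _ h

lemma Linked.trans {G : SimpleGraph V} {S : Set V} {u v w : V}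
    (h : Linked G S u v) (h' : Linked G S v w) : Linked G S u w :=
  Relation.ReflTransGen.trans h h'

lemma linked_of_reachable {G : SimpleGraph V} {S : Set V} {u v : S}
    (h : (G.induce S).Reachable u v) : Linked G S u v := by
  obtain ⟨p⟩ := h
  induction p with
  | nil => exact Relation.ReflTransGen.refl
  | @cons a b c h p ih =>
      exact Relation.ReflTransGen.head ⟨a.2, b.2, h⟩ ih

lemma reachable_of_linked {G : SimpleGraph V} {S : Set V} {u v : V}
    (h : Linked G S u v) (hu : u ∈ S) :
    ∀ (hv : v ∈ S), (G.induce S).Reachable ⟨u, hu⟩ ⟨v, hv⟩ := by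
  induction h with
  | refl => exact fun hv => SimpleGraph.Reachable.refl _
  | @tail b c _ hbc ih =>
      intro hv
      exact (ih hbc.1).trans (SimpleGraph.Adj.reachable (by exact hbc.2.2 :
        (G.induce S).Adj ⟨b, hbc.1⟩ ⟨c, hv⟩))

lemma preconnected_induce_iff {G : SimpleGraph V} {S : Set V} :
    (G.induce S).Preconnected ↔ ∀ u ∈ S, ∀ v ∈ S, Linked G S u v := by
  constructor
  · intro h u hu v hv
    exact linked_of_reachable (h ⟨u, hu⟩ ⟨v, hv⟩)
  · intro h u v
    exact reachable_of_linked (h u u.2 v v.2) u.2 v.2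

/-! ### Basic cell lemmas -/

lemma cell_linked {G : SimpleGraph V} {S C : Set V} (hC : IsCellOf G S C)
    {u v : V} (hu : u ∈ C) (hv : v ∈ C) : Linked G C u v :=
  preconnected_induce_iff.mp hC.2.2.1 u hu v hv

/-- absorption: a vertex outside `S` adjacent to a cell belongs to the cell -/
lemma cell_absorb {G : SimpleGraph V} {S C : Set V} (hC : IsCellOf G S C)
    {v c : V} (hv : v ∉ S) (hc : c ∈ C) (hadj : G.Adj v c) : v ∈ C := by
  have h : insert v C = C := by
    apply hC.2.2.2
    · exact Set.subset_insert _ _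
    · rintro x hx
      rcases Set.mem_insert_iff.mp hx with rfl | hx
      · exact hv
      · exact hC.2.1 hx
    · rw [preconnected_induce_iff]
      intro a ha b hb
      have key : ∀ x ∈ insert v C, Linked G (insert v C) x c := by
        intro x hx
        rcases Set.mem_insert_iff.mp hx with rfl | hx
        · exact Relation.ReflTransGen.single ⟨Set.mem_insert _ _,
            Set.mem_insert_of_mem _ hc, hadj⟩
        · exact (cell_linked hC hx hc).mono (Set.subset_insert _ _)
      exact (key a ha).trans (key b hb).symm
  rw [← h]; exact Set.mem_insert _ _

lemma boundary_subset_of_cell {G : SimpleGraph V} {S C : Set V} (hC : IsCellOf G S C) :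
    vBoundary G C ⊆ S := by
  rintro v ⟨hvC, c, hc, hadj⟩
  by_contra hvS
  exact hvC (cell_absorb hC hvS hc hadj)

/-- the connected component of `v` in the complement of `S` -/
def cellOf (G : SimpleGraph V) (S : Set V) (v : V) : Set V :=
  {w | Linked G Sᶜ v w}

lemma mem_cellOf_self {G : SimpleGraph V} {S : Set V} {v : V} : v ∈ cellOf G S v :=
  Relation.ReflTransGen.refl

lemma isCellOf_cellOf {G : SimpleGraph V} {S : Set V} {v : V} (hv : v ∉ S) :
    IsCellOf G S (cellOf G S v) := by
  refine ⟨⟨v, mem_cellOf_self⟩, ?_, ?_, ?_⟩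
  · intro w hw
    induction hw with
    | refl => exact hv
    | tail _ hab _ => exact hab.2.1
  · rw [preconnected_induce_iff]
    have key : ∀ w, Linked G Sᶜ v w → Linked G (cellOf G S v) v w := by
      intro w hw
      induction hw with
      | refl => exact Relation.ReflTransGen.refl
      | @tail b c hvb hbc ih =>
          exact ih.tail ⟨hvb, hvb.tail hbc, hbc.2.2⟩
    intro a ha b hb
    exact (key a ha).symm.trans (key b hb)
  · intro D hCD hDS hDconn
    apply Set.Subset.antisymm _ hCD
    intro d hd
    have : Linked G D v d := preconnected_induce_iff.mp hDconn v
      (hCD mem_cellOf_self) d hd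
    exact this.mono hDS

lemma cell_eq_cellOf {G : SimpleGraph V} {S C : Set V} (hC : IsCellOf G S C)
    {v : V} (hv : v ∈ C) : C = cellOf G S v := by
  have hsub : C ⊆ cellOf G S v := fun c hc => (cell_linked hC hv hc).mono hC.2.1
  exact (hC.2.2.2 _ hsub (isCellOf_cellOf (hC.2.1 hv)).2.1
    (isCellOf_cellOf (hC.2.1 hv)).2.2.1).symm

/-! ### Iso preserves distance -/

lemma iso_dist_le {W : Type*} {G : SimpleGraph V} {H : SimpleGraph W}
    (φ : G ≃g H) (u v : V) : H.dist (φ u) (φ v) ≤ G.dist u v := by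
  by_cases hr : G.Reachable u v
  · obtain ⟨p, hp⟩ := hr.exists_walk_length_eq_dist
    calc H.dist (φ u) (φ v) ≤ (p.map φ.toHom).length := SimpleGraph.dist_le _
      _ = G.dist u v := by rw [SimpleGraph.Walk.length_map, hp]
  · rw [SimpleGraph.dist_eq_zero_of_not_reachable hr]
    rw [SimpleGraph.dist_eq_zero_of_not_reachable]
    rw [SimpleGraph.Iso.reachable_iff]
    exact hr

lemma Iso.dist_eq {W : Type*} {G : SimpleGraph V} {H : SimpleGraph W}
    (φ : G ≃g H) (u v : V) : H.dist (φ u) (φ v) = G.dist u v := by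
  refine le_antisymm (iso_dist_le φ u v) ?_
  have := iso_dist_le φ.symm (φ u) (φ v)
  simpa using this

/-! ### The key distance-scaling lemma -/

/-- First-exit decomposition: a walk from a cell vertex to an `F`-vertex decomposes at the
first boundary vertex it hits. -/
lemma first_exit {G : SimpleGraph V} {F : Set V} {w v : V} (W : G.Walk w v)
    (hv : v ∈ F) : ∀ (C : Set V), IsCellOf G F C → w ∈ C →
    ∃ (z : V) (W₁ : G.Walk w z) (W₂ : G.Walk z v),
      1 ≤ W₁.length ∧ W₁.length + W₂.length = W.length ∧
      z ∈ vBoundary G C ∧ z ∈ F := by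
  induction W with
  | nil =>
      intro C hC hw
      exact absurd hv (hC.2.1 hw)
  | @cons w p v h W ih =>
      intro C hC hw
      by_cases hpF : p ∈ F
      · refine ⟨p, SimpleGraph.Walk.cons h SimpleGraph.Walk.nil, W, ?_, ?_, ?_, hpF⟩
        · simp
        · simp [add_comm]
        · exact ⟨fun hpC => hC.2.1 hpC hpF, w, hw, h.symm⟩
      · have hpC : p ∈ C := cell_absorb hC hpF hw h.symm
        obtain ⟨z, W₁, W₂, h1, h2, h3, h4⟩ := ih hv C hC hpC
        refine ⟨z, SimpleGraph.Walk.cons h W₁, W₂, ?_, ?_, h3, h4⟩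
        · simp
        · simp only [SimpleGraph.Walk.length_cons]
          omega

lemma dist_lower_bound {G : SimpleGraph V} {F : Set V} {ν : ℕ}
    (hF1 : AxiomF1 G F) (hH2 : AxiomH2 G F ν)
    (hRconn : (reducedGraph G F).Connected) :
    ∀ (L : ℕ) (u v : V) (hu : u ∈ F) (hv : v ∈ F) (W : G.Walk u v), W.length = L →
      ν * (reducedGraph G F).dist ⟨u, hu⟩ ⟨v, hv⟩ ≤ L := by
  intro L
  induction L using Nat.strong_induction_on with
  | _ L ih =>
    intro u v hu hv W hW
    cases W with
    | nil =>
        have h0 : (⟨u, hu⟩ : F) = ⟨u, hv⟩ := rfl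
        rw [h0, SimpleGraph.dist_self]
        simp
    | @cons _ w _ h W' =>
        have hwF : w ∉ F := fun hwF => hF1 u hu w hwF h
        have hC : IsCellOf G F (cellOf G F w) := isCellOf_cellOf hwF
        obtain ⟨z, W₁, W₂, h1, h2, hzB, hzF⟩ :=
          first_exit W' hv (cellOf G F w) hC mem_cellOf_self
        have hLen : 1 + (W₁.length + W₂.length) = L := by
          rw [← hW]; simp [h2, Nat.add_comm]
        have hW₂lt : W₂.length < L := by omega
        have ihz := ih W₂.length hW₂lt z v hzF hv W₂ rfl
        by_cases hne : u = z
        · have : (⟨u, hu⟩ : F) = ⟨z, hzF⟩ := Subtype.ext hne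
          rw [this]
          omega
        · have huB : u ∈ vBoundary G (cellOf G F w) :=
            ⟨fun huC => hC.2.1 huC hu, w, mem_cellOf_self, h⟩
          have radj : (reducedGraph G F).Adj ⟨u, hu⟩ ⟨z, hzF⟩ :=
            ⟨fun hh => hne (congrArg Subtype.val hh), cellOf G F w, hC, huB, hzB⟩
          have hdist1 : (reducedGraph G F).dist ⟨u, hu⟩ ⟨z, hzF⟩ = 1 :=
            SimpleGraph.dist_eq_one_iff_adj.mpr radj
          have htri : (reducedGraph G F).dist ⟨u, hu⟩ ⟨v, hv⟩ ≤
              1 + (reducedGraph G F).dist ⟨z, hzF⟩ ⟨v, hv⟩ := by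
            have := hRconn.dist_triangle (u := ⟨u, hu⟩) (v := ⟨z, hzF⟩) (w := ⟨v, hv⟩)
            rwa [hdist1] at this
          have hν : G.dist u z = ν := hH2 (cellOf G F w) hC u huB z hzB hne
          have hν' : ν ≤ W₁.length + 1 := by
            rw [← hν]
            have := SimpleGraph.dist_le (SimpleGraph.Walk.cons h W₁)
            simpa [Nat.add_comm] using this
          calc ν * (reducedGraph G F).dist ⟨u, hu⟩ ⟨v, hv⟩
              ≤ ν * (1 + (reducedGraph G F).dist ⟨z, hzF⟩ ⟨v, hv⟩) :=
                Nat.mul_le_mul_left _ htri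
            _ = ν + ν * (reducedGraph G F).dist ⟨z, hzF⟩ ⟨v, hv⟩ := by ring
            _ ≤ (W₁.length + 1) + W₂.length := Nat.add_le_add hν' ihz
            _ = L := by omega

lemma dist_upper_bound {G : SimpleGraph V} {F : Set V} {ν : ℕ}
    (hGconn : G.Connected) (hH2 : AxiomH2 G F ν) :
    ∀ (a b : F) (p : (reducedGraph G F).Walk a b), G.dist a b ≤ ν * p.length := by
  intro a b p
  induction p with
  | nil => simp [SimpleGraph.dist_self]
  | @cons a c b h p ih =>
      obtain ⟨hne, C, hC, haB, hcB⟩ := id h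
      have hdist : G.dist a c = ν :=
        hH2 C hC a haB c hcB (fun hh => hne (Subtype.ext hh))
      calc G.dist a b ≤ G.dist a c + G.dist c b := hGconn.dist_triangle
        _ ≤ ν + ν * p.length := by rw [hdist]; exact Nat.add_le_add_left ih _
        _ = ν * (SimpleGraph.Walk.cons h p).length := by
            simp [SimpleGraph.Walk.length_cons]; ring

/-- distances in `X` between `F`-vertices are `ν` times distances in the reduced graph. -/
lemma dist_scaling {G : SimpleGraph V} {F : Set V} {ν : ℕ}
    (hGconn : G.Connected) (hRconn : (reducedGraph G F).Connected)
    (hF1 : AxiomF1 G F) (hH2 : AxiomH2 G F ν)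
    {u v : V} (hu : u ∈ F) (hv : v ∈ F) :
    G.dist u v = ν * (reducedGraph G F).dist ⟨u, hu⟩ ⟨v, hv⟩ := by
  refine le_antisymm ?_ ?_
  · obtain ⟨p, hp⟩ := hRconn.exists_walk_length_eq_dist ⟨u, hu⟩ ⟨v, hv⟩
    have := dist_upper_bound hGconn hH2 ⟨u, hu⟩ ⟨v, hv⟩ p
    rwa [hp] at this
  · obtain ⟨W, hW⟩ := hGconn.exists_walk_length_eq_dist u v
    exact dist_lower_bound hF1 hH2 hRconn (G.dist u v) u v hu hv W hW

/-! ### The map `f = coe ∘ ψ` -/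

def psiMap (G : SimpleGraph V) (F : Set V) (ψ : G ≃g reducedGraph G F) : V → V :=
  fun v => ((ψ v : F) : V)

variable {G : SimpleGraph V} {F : Set V} {ψ : G ≃g reducedGraph G F}

lemma psiMap_mem_F (v : V) : psiMap G F ψ v ∈ F := (ψ v).2

lemma psiMap_inj : Function.Injective (psiMap G F ψ) := by
  intro a b h
  exact ψ.toEquiv.injective (Subtype.ext h)

lemma range_psiMap : Set.range (psiMap G F ψ) = F := by
  ext x
  constructor
  · rintro ⟨v, rfl⟩; exact psiMap_mem_F v
  · intro hx
    exact ⟨ψ.symm ⟨x, hx⟩, by simp [psiMap]⟩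

lemma psi_eq (v : V) : ψ v = ⟨psiMap G F ψ v, psiMap_mem_F v⟩ := Subtype.ext rfl

lemma Fpow_succ (n : ℕ) : Fpow G F ψ (n + 1) = psiMap G F ψ '' Fpow G F ψ n := rfl

lemma Fpow_one : Fpow G F ψ 1 = F := by
  rw [Fpow_succ]
  show psiMap G F ψ '' Set.univ = F
  rw [Set.image_univ, range_psiMap]

lemma Fpow_subset_F {n : ℕ} (hn : 1 ≤ n) : Fpow G F ψ n ⊆ F := by
  obtain ⟨m, rfl⟩ := Nat.exists_eq_add_of_le hn
  rw [Nat.add_comm, Fpow_succ]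
  rintro x ⟨v, _, rfl⟩
  exact psiMap_mem_F v

lemma mem_Fpow_succ_iff {n : ℕ} {v : V} :
    psiMap G F ψ v ∈ Fpow G F ψ (n + 1) ↔ v ∈ Fpow G F ψ n := by
  rw [Fpow_succ]
  exact ⟨fun ⟨w, hw, he⟩ => by rwa [← psiMap_inj he], fun h => ⟨v, h, rfl⟩⟩

lemma adj_psiMap_iff {a b : V} :
    (reducedGraph G F).Adj ⟨psiMap G F ψ a, psiMap_mem_F a⟩ ⟨psiMap G F ψ b, psiMap_mem_F b⟩ ↔
      G.Adj a b := by
  rw [← psi_eq, ← psi_eq]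
  exact ψ.map_rel_iff

lemma reducedGraph_connected (ψ : G ≃g reducedGraph G F) (hconn : G.Connected) : (reducedGraph G F).Connected := by
  have hne : Nonempty F := Nonempty.map ψ.toEquiv hconn.nonempty
  exact ⟨SimpleGraph.Preconnected.map ψ.toHom ψ.toEquiv.surjective hconn.preconnected⟩

/-- `f`-scaling of distances -/
lemma dist_psiMap (hconn : G.Connected) (hF1 : AxiomF1 G F) {ν : ℕ} (hH2 : AxiomH2 G F ν)
    (a b : V) : G.dist (psiMap G F ψ a) (psiMap G F ψ b) = ν * G.dist a b := by
  rw [dist_scaling hconn (reducedGraph_connected ψ hconn) hF1 hH2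
    (psiMap_mem_F a) (psiMap_mem_F b), ← psi_eq, ← psi_eq, Iso.dist_eq]

/-- a connected set avoiding `S` meeting a cell of `S` is contained in it -/
lemma subset_cell_of_inter {G : SimpleGraph V} {S D C : Set V} (hD : IsCellOf G S D)
    (hC1 : C ⊆ Sᶜ) (hC2 : (G.induce C).Preconnected) (hmeet : (C ∩ D).Nonempty) :
    C ⊆ D := by
  obtain ⟨d, hdC, hdD⟩ := hmeet
  have hT : D ∪ C = D := by
    apply hD.2.2.2
    · exact Set.subset_union_left
    · exact Set.union_subset hD.2.1 hC1
    · rw [preconnected_induce_iff]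
      have key : ∀ t ∈ D ∪ C, Linked G (D ∪ C) t d := by
        rintro t (ht | ht)
        · exact (cell_linked hD ht hdD).mono Set.subset_union_left
        · exact (preconnected_induce_iff.mp hC2 t ht d hdC).mono Set.subset_union_right
      intro a ha b hb
      exact (key a ha).trans (key b hb).symm
  intro c hc
  rw [← hT]
  exact Set.mem_union_right _ hc

/-- projection relation: two `F`-vertices of `D` adjacent in the reduced graph -/
def Rrel (G : SimpleGraph V) (F : Set V) (D : Set V) (p q : V) : Prop :=
  ∃ hp : p ∈ F, ∃ hq : q ∈ F, p ∈ D ∧ q ∈ D ∧ (reducedGraph G F).Adj ⟨p, hp⟩ ⟨q, hq⟩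

lemma project {G : SimpleGraph V} {F : Set V} (hF1 : AxiomF1 G F) {D : Set V} {u : V}
    (hu : u ∈ F) (huD : u ∈ D) :
    ∀ v, Linked G D u v →
      (v ∈ F → Relation.ReflTransGen (Rrel G F D) u v) ∧
      (v ∉ F → ∃ C, IsCellOf G F C ∧ v ∈ C ∧ ∃ w, w ∈ D ∧ ∃ hw : w ∈ F,
        w ∈ vBoundary G C ∧ Relation.ReflTransGen (Rrel G F D) u w) := by
  intro v hv
  induction hv with
  | refl =>
      exact ⟨fun _ => Relation.ReflTransGen.refl, fun hnF => absurd hu hnF⟩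
  | @tail v v' hv hvc ih =>
      constructor
      · intro hv'F
        by_cases hvF : v ∈ F
        · exact absurd hvc.2.2 (hF1 v hvF v' hv'F)
        · obtain ⟨C, hC, hvC, w, hwD, hwF, hwB, hRT⟩ := ih.2 hvF
          have hv'B : v' ∈ vBoundary G C :=
            ⟨fun hh => hC.2.1 hh hv'F, v, hvC, hvc.2.2.symm⟩
          by_cases hwv' : w = v'
          · exact hwv' ▸ hRT
          · exact hRT.tail ⟨hwF, hv'F, hwD, hvc.2.1,
              fun hh => hwv' (congrArg Subtype.val hh), C, hC, hwB, hv'B⟩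
      · intro hv'F
        by_cases hvF : v ∈ F
        · refine ⟨cellOf G F v', isCellOf_cellOf hv'F, mem_cellOf_self, v, hvc.1, hvF,
            ⟨fun hh => (isCellOf_cellOf hv'F).2.1 hh hvF, v', mem_cellOf_self, hvc.2.2⟩,
            ih.1 hvF⟩
        · obtain ⟨C, hC, hvC, w, hwD, hwF, hwB, hRT⟩ := ih.2 hvF
          exact ⟨C, hC, cell_absorb hC hv'F hvC hvc.2.2.symm, w, hwD, hwF, hwB, hRT⟩

lemma unproject {G : SimpleGraph V} {F : Set V} {ψ : G ≃g reducedGraph G F} {D : Set V} :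
    ∀ p q, Relation.ReflTransGen (Rrel G F D) p q →
      ∀ e₁ e₂, psiMap G F ψ e₁ = p → psiMap G F ψ e₂ = q →
        Linked G {v | psiMap G F ψ v ∈ D} e₁ e₂ := by
  intro p q h
  induction h with
  | refl =>
      intro e₁ e₂ h1 h2
      have : e₁ = e₂ := psiMap_inj (h1.trans h2.symm)
      exact this ▸ Relation.ReflTransGen.refl
  | @tail b c hpb hbc ih =>
      intro e₁ e₂ h1 h2
      obtain ⟨hbF, hcF, hbD, hcD, radj⟩ := hbc
      set e' := ψ.symm ⟨b, hbF⟩ with he'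
      have hfe' : psiMap G F ψ e' = b := by simp [psiMap, he']
      have hlink : Linked G {v | psiMap G F ψ v ∈ D} e₁ e' := ih e₁ e' h1 hfe'
      have hadj : G.Adj e' e₂ := by
        rw [← ψ.map_rel_iff]
        rw [show ψ e' = ⟨b, hbF⟩ from Subtype.ext hfe',
          show ψ e₂ = ⟨c, hcF⟩ from Subtype.ext h2]
        exact radj
      exact hlink.tail ⟨by simpa [Set.mem_setOf_eq, hfe'] using hbD,
        by simpa [Set.mem_setOf_eq, h2] using hcD, hadj⟩

lemma exists_outer_boundary {G : SimpleGraph V} {F : Set V} {ψ : G ≃g reducedGraph G F}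
    (hF1 : AxiomF1 G F) {n : ℕ} (hn : 1 ≤ n) {D : Set V}
    (hD : IsCellOf G (Fpow G F ψ (n + 1)) D) {x y : V}
    (hx : x ∈ vBoundary G D) (hy : y ∈ vBoundary G D) (hxy : x ≠ y) :
    ∃ z C, IsCellOf G F C ∧ x ∈ vBoundary G C ∧ z ∈ vBoundary G C ∧ z ∈ F ∧ z ∈ D ∧
      z ∉ Fpow G F ψ (n + 1) := by
  have hFn1F : Fpow G F ψ (n + 1) ⊆ F := Fpow_subset_F (by omega)
  have hxFn1 : x ∈ Fpow G F ψ (n + 1) := boundary_subset_of_cell hD hx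
  have hyFn1 : y ∈ Fpow G F ψ (n + 1) := boundary_subset_of_cell hD hy
  have hxF : x ∈ F := hFn1F hxFn1
  obtain ⟨hxD, d, hdD, hxd⟩ := hx
  have hdF : d ∉ F := fun hdF => hF1 x hxF d hdF hxd
  have hC : IsCellOf G F (cellOf G F d) := isCellOf_cellOf hdF
  have hCD : cellOf G F d ⊆ D := by
    apply subset_cell_of_inter hD _ hC.2.2.1 ⟨d, mem_cellOf_self, hdD⟩
    exact fun c hc hcFn1 => hC.2.1 hc (hFn1F hcFn1)
  have hxBC : x ∈ vBoundary G (cellOf G F d) :=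
    ⟨fun hxC => hC.2.1 hxC hxF, d, mem_cellOf_self, hxd⟩
  by_cases hall : ∀ z ∈ vBoundary G (cellOf G F d), z ∈ Fpow G F ψ (n + 1)
  · exfalso
    have hDC : D ⊆ cellOf G F d := by
      intro u hu
      have hlink : Linked G D d u :=
        preconnected_induce_iff.mp hD.2.2.1 d hdD u hu
      clear hu
      induction hlink with
      | refl => exact mem_cellOf_self
      | @tail b c hdb hbc ih =>
          by_cases hcC : c ∈ cellOf G F d
          · exact hcC
          · exfalso
            have hcB : c ∈ vBoundary G (cellOf G F d) := ⟨hcC, b, ih, hbc.2.2.symm⟩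
            exact hD.2.1 hbc.2.1 (hall c hcB)
    have hDeq : D = cellOf G F d := Set.Subset.antisymm hDC hCD
    have hyBC : y ∈ vBoundary G (cellOf G F d) := hDeq ▸ hy
    obtain ⟨a, haFn, hax⟩ := hxFn1
    obtain ⟨b, hbFn, hby⟩ := hyFn1
    have hax' : psiMap G F ψ a = x := hax
    have hby' : psiMap G F ψ b = y := hby
    have radj : (reducedGraph G F).Adj ⟨psiMap G F ψ a, psiMap_mem_F a⟩
        ⟨psiMap G F ψ b, psiMap_mem_F b⟩ := by
      refine ⟨fun hh => hxy ?_, cellOf G F d, hC, ?_, ?_⟩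
      · rw [← hax', ← hby']
        exact congrArg Subtype.val hh
      · show psiMap G F ψ a ∈ _
        rw [hax']; exact hxBC
      · show psiMap G F ψ b ∈ _
        rw [hby']; exact hyBC
    have hab : G.Adj a b := adj_psiMap_iff.mp radj
    exact hF1 a (Fpow_subset_F hn haFn) b (Fpow_subset_F hn hbFn) hab
  · push_neg at hall
    obtain ⟨z, hzB, hzn⟩ := hall
    have hzF : z ∈ F := boundary_subset_of_cell hC hzB
    obtain ⟨hzC, c, hcC, hzc⟩ := hzB
    have hzD : z ∈ D := cell_absorb hD hzn (hCD hcC) hzc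
    exact ⟨z, cellOf G F d, hC, hxBC, ⟨hzC, c, hcC, hzc⟩, hzF, hzD, hzn⟩

lemma isCellOf_pullback {G : SimpleGraph V} {F : Set V} {ψ : G ≃g reducedGraph G F}
    (hF1 : AxiomF1 G F) {n : ℕ} (hn : 1 ≤ n) {D : Set V}
    (hD : IsCellOf G (Fpow G F ψ (n + 1)) D)
    (hne : {v | psiMap G F ψ v ∈ D}.Nonempty) :
    IsCellOf G (Fpow G F ψ n) {v | psiMap G F ψ v ∈ D} := by
  set f := psiMap G F ψ with hf
  set E := {v | f v ∈ D} with hE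
  have hFn1F : Fpow G F ψ (n + 1) ⊆ F := Fpow_subset_F (by omega)
  have hEsub : E ⊆ (Fpow G F ψ n)ᶜ := by
    intro v hv hvFn
    exact hD.2.1 hv (mem_Fpow_succ_iff.mpr hvFn)
  refine ⟨hne, hEsub, ?_, ?_⟩
  · rw [preconnected_induce_iff]
    intro e₁ he₁ e₂ he₂
    have hL : Linked G D (f e₁) (f e₂) :=
      preconnected_induce_iff.mp hD.2.2.1 (f e₁) he₁ (f e₂) he₂
    have hproj := (project hF1 (psiMap_mem_F e₁) he₁ (f e₂) hL).1 (psiMap_mem_F e₂)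
    exact unproject (f e₁) (f e₂) hproj e₁ e₂ rfl rfl
  · intro D' hED' hD'Fn hD'conn
    have fD'₁ : ∀ p ∈ D', f p ∉ Fpow G F ψ (n + 1) := by
      intro p hp hfp
      exact hD'Fn hp (mem_Fpow_succ_iff.mp hfp)
    set 𝒞 := {C | IsCellOf G F C ∧ ∃ p ∈ D', f p ∈ vBoundary G C} with h𝒞
    set Dbig := D ∪ f '' D' ∪ ⋃₀ 𝒞 with hDbig
    have hmemD : ∀ t ∈ D, t ∈ Dbig := fun t ht =>
      Set.mem_union_left _ (Set.mem_union_left _ ht)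
    have hmemI : ∀ p ∈ D', f p ∈ Dbig := fun p hp =>
      Set.mem_union_left _ (Set.mem_union_right _ ⟨p, hp, rfl⟩)
    have hmemC : ∀ C ∈ 𝒞, ∀ t ∈ C, t ∈ Dbig := fun C hC t ht =>
      Set.mem_union_right _ ⟨C, hC, ht⟩
    have hDbig_sub : Dbig ⊆ (Fpow G F ψ (n + 1))ᶜ := by
      rintro t ((ht | ⟨p, hp, rfl⟩) | ⟨C, hC, htC⟩)
      · exact hD.2.1 ht
      · exact fD'₁ p hp
      · exact fun htFn1 => hC.1.2.1 htC (hFn1F htFn1)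
    have helper1 : ∀ p ∈ D', ∀ q ∈ D', G.Adj p q → Linked G Dbig (f p) (f q) := by
      intro p hp q hq hpq
      have radj : (reducedGraph G F).Adj ⟨f p, psiMap_mem_F p⟩ ⟨f q, psiMap_mem_F q⟩ :=
        adj_psiMap_iff.mpr hpq
      obtain ⟨hne', C, hCcell, hpB, hqB⟩ := id radj
      have hCin : C ∈ 𝒞 := ⟨hCcell, p, hp, hpB⟩
      obtain ⟨hpnC, c, hcC, hpc⟩ := hpB
      obtain ⟨hqnC, c', hc'C, hqc'⟩ := hqB
      have l1 : Linked G Dbig (f p) c :=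
        Relation.ReflTransGen.single ⟨hmemI p hp, hmemC C hCin c hcC, hpc⟩
      have l2 : Linked G Dbig c c' :=
        (cell_linked hCcell hcC hc'C).mono (fun t ht => hmemC C hCin t ht)
      have l3 : Linked G Dbig c' (f q) :=
        Relation.ReflTransGen.single ⟨hmemC C hCin c' hc'C, hmemI q hq, hqc'.symm⟩
      exact (l1.trans l2).trans l3
    have helper2 : ∀ p q, Linked G D' p q → Linked G Dbig (f p) (f q) := by
      intro p q h
      induction h with
      | refl => exact Relation.ReflTransGen.refl
      | @tail b c hb hbc ih => exact ih.trans (helper1 b hbc.1 c hbc.2.1 hbc.2.2)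
    obtain ⟨e₀, he₀⟩ := hne
    have he₀D' : e₀ ∈ D' := hED' he₀
    have key : ∀ t ∈ Dbig, Linked G Dbig t (f e₀) := by
      rintro t ((ht | ⟨p, hp, rfl⟩) | ⟨C, hC, htC⟩)
      · exact (cell_linked hD ht he₀).mono (fun s hs => hmemD s hs)
      · exact helper2 p e₀ (preconnected_induce_iff.mp hD'conn p hp e₀ he₀D')
      · obtain ⟨hCcell, p, hpD', hpB⟩ := hC
        obtain ⟨hpnC, c, hcC, hpc⟩ := hpB
        have l1 : Linked G Dbig t c :=
          (cell_linked hCcell htC hcC).mono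
            (fun s hs => hmemC C ⟨hCcell, p, hpD', ⟨hpnC, c, hcC, hpc⟩⟩ s hs)
        have l2 : Linked G Dbig c (f p) :=
          Relation.ReflTransGen.single
            ⟨hmemC C ⟨hCcell, p, hpD', ⟨hpnC, c, hcC, hpc⟩⟩ c hcC, hmemI p hpD', hpc.symm⟩
        exact (l1.trans l2).trans
          (helper2 p e₀ (preconnected_induce_iff.mp hD'conn p hpD' e₀ he₀D'))
    have hDbig_pre : (G.induce Dbig).Preconnected := by
      rw [preconnected_induce_iff]
      intro u hu w hw
      exact (key u hu).trans (key w hw).symm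
    have hDbig_eq : Dbig = D :=
      hD.2.2.2 Dbig (fun t ht => hmemD t ht) hDbig_sub hDbig_pre
    apply Set.Subset.antisymm _ hED'
    intro p hp
    have : f p ∈ Dbig := hmemI p hp
    rw [hDbig_eq] at this
    exact this

/-- In a homogeneously self-similar graph with length scaling factor `ν`, the
diameter of the boundary of an n-cell is exactly `ν^n`: any two distinct
boundary vertices of an n-cell are at distance `ν^n`. -/
theorem diam_boundary_ncell
    {V : Type*} [Infinite V] (G : SimpleGraph V) (hconn : G.Connected)
    (F : Set V) (ψ : G ≃g reducedGraph G F)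
    (hF1 : AxiomF1 G F) (hF2 : AxiomF2 G F) (hH1 : AxiomH1 G F)
    (ν : ℕ) (hν : 2 ≤ ν) (hH2 : AxiomH2 G F ν) :
    ∀ n : ℕ, 1 ≤ n → ∀ Cn : Set V, IsCellOf G (Fpow G F ψ n) Cn →
      ∀ x ∈ vBoundary G Cn, ∀ y ∈ vBoundary G Cn, x ≠ y →
        G.dist x y = ν ^ n := by
  intro n hn
  induction n, hn using Nat.le_induction with
  | base =>
      intro Cn hCn x hx y hy hxy
      rw [pow_one]
      rw [Fpow_one] at hCn
      exact hH2 Cn hCn x hx y hy hxy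
  | succ n hn ih =>
      intro D hD x hx y hy hxy
      set f := psiMap G F ψ with hf
      have hxFn1 : x ∈ Fpow G F ψ (n + 1) := boundary_subset_of_cell hD hx
      have hyFn1 : y ∈ Fpow G F ψ (n + 1) := boundary_subset_of_cell hD hy
      have hFn1F : Fpow G F ψ (n + 1) ⊆ F := Fpow_subset_F (by omega)
      obtain ⟨a, haFn, hax⟩ := hxFn1
      obtain ⟨b, hbFn, hby⟩ := hyFn1
      have hax' : f a = x := hax
      have hby' : f b = y := hby
      have hab : a ≠ b := by
        rintro rfl
        exact hxy (hax'.symm.trans hby')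
      obtain ⟨z, C, hC, hxBC, hzBC, hzF, hzD, hzn⟩ :=
        exists_outer_boundary hF1 hn hD hx hy hxy
      obtain ⟨w, C', hC', hyBC', hwBC', hwF, hwD, hwn⟩ :=
        exists_outer_boundary hF1 hn hD hy hx hxy.symm
      set E := {v | f v ∈ D} with hE
      have hxF : x ∈ F := hFn1F (boundary_subset_of_cell hD hx)
      have hyF : y ∈ F := hFn1F (boundary_subset_of_cell hD hy)
      -- a is in the boundary of E
      have haB : a ∈ vBoundary G E := by
        refine ⟨?_, ψ.symm ⟨z, hzF⟩, ?_, ?_⟩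
        · show f a ∈ D → False
          rw [hax']; exact hx.1
        · show f (ψ.symm ⟨z, hzF⟩) ∈ D
          have : f (ψ.symm ⟨z, hzF⟩) = z := by simp [hf, psiMap]
          rw [this]; exact hzD
        · rw [← ψ.map_rel_iff]
          have h1 : ψ a = ⟨x, hxF⟩ := Subtype.ext hax'
          have h2 : ψ (ψ.symm ⟨z, hzF⟩) = ⟨z, hzF⟩ := ψ.apply_symm_apply _
          rw [h1, h2]
          refine ⟨fun hh => ?_, C, hC, hxBC, hzBC⟩
          have hxz : x = z := congrArg Subtype.val hh
          exact hzn (hxz ▸ (boundary_subset_of_cell hD hx))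
      have hbB : b ∈ vBoundary G E := by
        refine ⟨?_, ψ.symm ⟨w, hwF⟩, ?_, ?_⟩
        · show f b ∈ D → False
          rw [hby']; exact hy.1
        · show f (ψ.symm ⟨w, hwF⟩) ∈ D
          have : f (ψ.symm ⟨w, hwF⟩) = w := by simp [hf, psiMap]
          rw [this]; exact hwD
        · rw [← ψ.map_rel_iff]
          have h1 : ψ b = ⟨y, hyF⟩ := Subtype.ext hby'
          have h2 : ψ (ψ.symm ⟨w, hwF⟩) = ⟨w, hwF⟩ := ψ.apply_symm_apply _
          rw [h1, h2]
          refine ⟨fun hh => ?_, C', hC', hyBC', hwBC'⟩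
          have hyw : y = w := congrArg Subtype.val hh
          exact hwn (hyw ▸ (boundary_subset_of_cell hD hy))
      have hEcell : IsCellOf G (Fpow G F ψ n) E := by
        refine isCellOf_pullback hF1 hn hD ⟨ψ.symm ⟨z, hzF⟩, ?_⟩
        show f (ψ.symm ⟨z, hzF⟩) ∈ D
        have : f (ψ.symm ⟨z, hzF⟩) = z := by simp [hf, psiMap]
        rw [this]; exact hzD
      have hdab : G.dist a b = ν ^ n := ih E hEcell a haB b hbB hab
      calc G.dist x y = G.dist (f a) (f b) := by rw [hax', hby']
        _ = ν * G.dist a b := dist_psiMap hconn hF1 hH2 a b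
        _ = ν ^ (n + 1) := by rw [hdab, pow_succ]; ring
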